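/- Let p : X → Y be a branched covering, and let U be a portly subset of Y. Then p⁻¹(U) is portly in X (in particular connected) and the restriction p : p⁻¹(U) → U is a branched covering. -/

import Mathlib

/-- A subset `U` of a topological space `X` is *portly* if it is open, dense, and
locally connected in `X`. -/
def Portly (X : Type*) [TopologicalSpace X] (U : Set X) : Prop :=
  IsOpen U ∧ Dense U ∧ ∀ W : Set X, IsOpen W → IsConnected W → IsConnected (W ∩ U)

/-- `V` is a connected component of `S`. -/
def IsComponentOf {X : Type*} [TopologicalSpace X] (V S : Set X) : Prop :=
  ∃ x ∈ S, V = connectedComponentIn S x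

/-- A *spread* is a continuous map such that the connected components of preimages of
open subsets of the base form a basis for the topology of the total space. -/
def IsSpread {X Y : Type*} [TopologicalSpace X] [TopologicalSpace Y] (p : X → Y) : Prop :=
  Continuous p ∧ TopologicalSpace.IsTopologicalBasis
    {V : Set X | ∃ U : Set Y, IsOpen U ∧ IsComponentOf V (p ⁻¹' U)}

/-- `p` maps `V` homeomorphically onto `U`. -/
def MapsHomeomorphicallyOnto {X Y : Type*} [TopologicalSpace X] [TopologicalSpace Y]
    (p : X → Y) (V : Set X) (U : Set Y) : Prop :=
  ∃ h : V ≃ₜ U, ∀ v : V, (h v : Y) = p v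

/-- The ordinary locus in the base of a spread: points admitting an open neighborhood
evenly covered by `p`. -/
def OrdBase {X Y : Type*} [TopologicalSpace X] [TopologicalSpace Y] (p : X → Y) : Set Y :=
  {y | ∃ U : Set Y, IsOpen U ∧ y ∈ U ∧
    ∀ V : Set X, IsComponentOf V (p ⁻¹' U) → MapsHomeomorphicallyOnto p V U}

/-- The ordinary locus in the total space of a spread. -/
def OrdTotal {X Y : Type*} [TopologicalSpace X] [TopologicalSpace Y] (p : X → Y) : Set X :=
  p ⁻¹' OrdBase p

/-- A *complete* spread: every monotone choice of connected components of preimages of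
connected open neighborhoods of a point of the closure of the image has nonempty
intersection. -/
def IsCompleteSpread {X Y : Type*} [TopologicalSpace X] [TopologicalSpace Y]
    (p : X → Y) : Prop :=
  IsSpread p ∧ ∀ y ∈ closure (Set.range p),
    ∀ χ : {U : Set Y // IsOpen U ∧ IsConnected U ∧ y ∈ U} → Set X,
      (∀ U, IsComponentOf (χ U) (p ⁻¹' U.1)) →
      (∀ U V, U.1 ⊆ V.1 → χ U ⊆ χ V) →
      (⋂ U, χ U).Nonempty

/-- A *branched covering* is a complete surjective spread between connected spaces whose
ordinary loci are portly. -/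
def IsBranchedCovering {X Y : Type*} [TopologicalSpace X] [TopologicalSpace Y]
    (p : X → Y) : Prop :=
  IsCompleteSpread p ∧ Function.Surjective p ∧ ConnectedSpace X ∧ ConnectedSpace Y ∧
    Portly X (OrdTotal p) ∧ Portly Y (OrdBase p)


open Set Topology TopologicalSpace

section BCLemmas
variable {X Y : Type*} [TopologicalSpace X] [TopologicalSpace Y]
lemma chain_lemma {W S : Set X} (hWc : IsConnected W) (hWo : IsOpen W)
    (H : ∀ x ∈ W, ∀ O : Set X, IsOpen O → x ∈ O →
      ∃ N : Set X, IsOpen N ∧ x ∈ N ∧ N ⊆ O ∩ W ∧ IsConnected (N ∩ S)) :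
    IsConnected (W ∩ S) := by
  obtain ⟨x₀, hx₀⟩ := hWc.nonempty
  obtain ⟨N₀, _, hx₀N, hN₀sub, hN₀c⟩ := H x₀ hx₀ univ isOpen_univ (mem_univ _)
  have hne : (W ∩ S).Nonempty := hN₀c.nonempty.mono (fun z hz => ⟨(hN₀sub hz.1).2, hz.2⟩)
  refine ⟨hne, ?_⟩
  rw [isPreconnected_iff_subset_of_disjoint]
  intro u v hu hv hcov hdisj
  set Wu : Set X := {x | x ∈ W ∧ ∃ N : Set X, IsOpen N ∧ x ∈ N ∧ N ⊆ W ∧ (N ∩ S).Nonempty ∧ N ∩ S ⊆ u} with hWu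
  set Wv : Set X := {x | x ∈ W ∧ ∃ N : Set X, IsOpen N ∧ x ∈ N ∧ N ⊆ W ∧ (N ∩ S).Nonempty ∧ N ∩ S ⊆ v} with hWv
  have step : ∀ N : Set X, IsOpen N → N ⊆ W → N ∩ S ⊆ u → N ⊆ Wu := by
    intro N hNo hNW hNu z hz
    obtain ⟨N', hN'o, hzN', hN'sub, hN'c⟩ := H z (hNW hz) N hNo hz
    exact ⟨hNW hz, N', hN'o, hzN', fun w hw => (hN'sub hw).2, hN'c.nonempty,
      fun w hw => hNu ⟨(hN'sub hw.1).1, hw.2⟩⟩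
  have stepv : ∀ N : Set X, IsOpen N → N ⊆ W → N ∩ S ⊆ v → N ⊆ Wv := by
    intro N hNo hNW hNu z hz
    obtain ⟨N', hN'o, hzN', hN'sub, hN'c⟩ := H z (hNW hz) N hNo hz
    exact ⟨hNW hz, N', hN'o, hzN', fun w hw => (hN'sub hw).2, hN'c.nonempty,
      fun w hw => hNu ⟨(hN'sub hw.1).1, hw.2⟩⟩
  have hWuo : IsOpen Wu := by
    rw [isOpen_iff_forall_mem_open]
    rintro x ⟨hxW, N, hNo, hxN, hNW, hNne, hNu⟩
    exact ⟨N, step N hNo hNW hNu, hNo, hxN⟩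
  have hWvo : IsOpen Wv := by
    rw [isOpen_iff_forall_mem_open]
    rintro x ⟨hxW, N, hNo, hxN, hNW, hNne, hNu⟩
    exact ⟨N, stepv N hNo hNW hNu, hNo, hxN⟩
  have hcovW : W ⊆ Wu ∪ Wv := by
    intro x hx
    obtain ⟨N, hNo, hxN, hNsub, hNc⟩ := H x hx univ isOpen_univ (mem_univ _)
    have hNW : N ⊆ W := fun w hw => (hNsub hw).2
    have hNS : N ∩ S ⊆ u ∪ v := fun w hw => hcov ⟨hNW hw.1, hw.2⟩
    have hdisj' : N ∩ S ∩ (u ∩ v) = ∅ := by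
      apply subset_empty_iff.mp
      rw [← hdisj]
      exact fun w hw => ⟨⟨hNW hw.1.1, hw.1.2⟩, hw.2⟩
    rcases (isPreconnected_iff_subset_of_disjoint.mp hNc.isPreconnected) u v hu hv hNS hdisj'
      with h | h
    · exact Or.inl ⟨hx, N, hNo, hxN, hNW, hNc.nonempty, h⟩
    · exact Or.inr ⟨hx, N, hNo, hxN, hNW, hNc.nonempty, h⟩
  have hdisjW : W ∩ (Wu ∩ Wv) = ∅ := by
    apply subset_empty_iff.mp
    rintro x ⟨hxW, ⟨-, Nu, hNuo, hxNu, hNuW, -, hNuu⟩, ⟨-, Nv, hNvo, hxNv, hNvW, -, hNvv⟩⟩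
    obtain ⟨N', hN'o, hxN', hN'sub, hN'c⟩ := H x hxW (Nu ∩ Nv) (hNuo.inter hNvo) ⟨hxNu, hxNv⟩
    obtain ⟨w, hw⟩ := hN'c.nonempty
    have hwu : w ∈ u := hNuu ⟨(hN'sub hw.1).1.1, hw.2⟩
    have hwv : w ∈ v := hNvv ⟨(hN'sub hw.1).1.2, hw.2⟩
    have : w ∈ W ∩ S ∩ (u ∩ v) := ⟨⟨(hN'sub hw.1).2, hw.2⟩, hwu, hwv⟩
    rw [hdisj] at this
    exact this.elim
  rcases (isPreconnected_iff_subset_of_disjoint.mp hWc.isPreconnected) Wu Wv hWuo hWvo hcovW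
    hdisjW with h | h
  · left
    rintro z ⟨hzW, hzS⟩
    obtain ⟨-, N, -, hzN, -, -, hNu⟩ := h hzW
    exact hNu ⟨hzN, hzS⟩
  · right
    rintro z ⟨hzW, hzS⟩
    obtain ⟨-, N, -, hzN, -, -, hNu⟩ := h hzW
    exact hNu ⟨hzN, hzS⟩
lemma preconn_connectedComponentIn_eq {s : Set X} (hs : IsPreconnected s) {x : X} (hx : x ∈ s) :
    connectedComponentIn s x = s :=
  subset_antisymm (connectedComponentIn_subset s x) (hs.subset_connectedComponentIn hx subset_rfl)

/-- Transfer of `connectedComponentIn` along the inclusion of a subset `Z ⊆ X`. -/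
lemma image_connectedComponentIn_val {Z F : Set X} (hFZ : F ⊆ Z) {x : X} (hx : x ∈ F) :
    Subtype.val '' (connectedComponentIn ((Subtype.val : Z → X) ⁻¹' F) ⟨x, hFZ hx⟩)
      = connectedComponentIn F x := by
  apply subset_antisymm
  · apply IsPreconnected.subset_connectedComponentIn
    · exact (isPreconnected_connectedComponentIn).image _ continuous_subtype_val.continuousOn
    · exact ⟨⟨x, hFZ hx⟩, mem_connectedComponentIn hx, rfl⟩
    · rintro w ⟨z, hz, rfl⟩
      exact connectedComponentIn_subset ((Subtype.val : Z → X) ⁻¹' F) ⟨x, hFZ hx⟩ hz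
  · intro w hw
    have hwZ : w ∈ Z := hFZ (connectedComponentIn_subset _ _ hw)
    refine ⟨⟨w, hwZ⟩, ?_, rfl⟩
    have hpre : IsPreconnected ((Subtype.val : Z → X) ⁻¹' (connectedComponentIn F x)) := by
      rw [← Topology.IsInducing.subtypeVal.isPreconnected_image]
      have : Subtype.val '' ((Subtype.val : Z → X) ⁻¹' (connectedComponentIn F x))
          = connectedComponentIn F x := by
        rw [Subtype.image_preimage_coe]
        exact inter_eq_self_of_subset_right ((connectedComponentIn_subset F x).trans hFZ)
      rw [this]
      exact isPreconnected_connectedComponentIn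
    have : (Subtype.val : Z → X) ⁻¹' (connectedComponentIn F x) ⊆
        connectedComponentIn ((Subtype.val : Z → X) ⁻¹' F) ⟨x, hFZ hx⟩ :=
      hpre.subset_connectedComponentIn (by exact mem_connectedComponentIn hx)
        (fun z hz => connectedComponentIn_subset F x hz)
    exact this hw

lemma connectedComponentIn_val_preimage {Z F : Set X} (hFZ : F ⊆ Z) {x : X} (hx : x ∈ F) :
    connectedComponentIn ((Subtype.val : Z → X) ⁻¹' F) ⟨x, hFZ hx⟩
      = (Subtype.val : Z → X) ⁻¹' (connectedComponentIn F x) := by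
  rw [← image_connectedComponentIn_val hFZ hx, preimage_image_eq _ Subtype.val_injective]

/-- Inclusion homeomorphism between `val ⁻¹' V` (as a subset of a subtype `Z`) and `V`. -/
def restrictHomeo {Z V : Set X} (hVZ : V ⊆ Z) :
    ((Subtype.val : Z → X) ⁻¹' V) ≃ₜ V where
  toFun v := ⟨v.1.1, v.2⟩
  invFun v := ⟨⟨v.1, hVZ v.2⟩, v.2⟩
  left_inv v := rfl
  right_inv v := rfl
  continuous_toFun := Continuous.subtype_mk (continuous_subtype_val.comp continuous_subtype_val) _
  continuous_invFun := Continuous.subtype_mk (Continuous.subtype_mk continuous_subtype_val _) _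

/-- The property of being an evenly covered open set. -/
def EvenlyCovered (p : X → Y) (U : Set Y) : Prop :=
  IsOpen U ∧ ∀ V : Set X, IsComponentOf V (p ⁻¹' U) → MapsHomeomorphicallyOnto p V U

lemma EvenlyCovered.subset_ordBase {p : X → Y} {U : Set Y} (h : EvenlyCovered p U) :
    U ⊆ OrdBase p := fun _ hy => ⟨U, h.1, hy, h.2⟩

lemma mem_ordBase_iff {p : X → Y} {y : Y} :
    y ∈ OrdBase p ↔ ∃ U : Set Y, EvenlyCovered p U ∧ y ∈ U := by
  constructor
  · rintro ⟨U, hUo, hyU, hU⟩; exact ⟨U, ⟨hUo, hU⟩, hyU⟩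
  · rintro ⟨U, ⟨hUo, hU⟩, hyU⟩; exact ⟨U, hUo, hyU, hU⟩

lemma isOpen_ordBase (p : X → Y) : IsOpen (OrdBase p) := by
  rw [isOpen_iff_forall_mem_open]
  rintro y ⟨U, hUo, hyU, hU⟩
  exact ⟨U, EvenlyCovered.subset_ordBase ⟨hUo, hU⟩, hUo, hyU⟩

lemma subtype_val_preimage_preconnected {Z : Set Y} {W : Set Y} (hWZ : W ⊆ Z)
    (hW : IsPreconnected W) : IsPreconnected ((Subtype.val : Z → Y) ⁻¹' W) := by
  rw [← Topology.IsInducing.subtypeVal.isPreconnected_image, Subtype.image_preimage_coe,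
    inter_eq_right.mpr hWZ]
  exact hW

/-- Key sublemma: components of the preimage of a connected open subset of an evenly
covered set map homeomorphically onto it. -/
lemma evenlyCovered_restrict {p : X → Y} (hpc : Continuous p) {U₀ W₁ : Set Y}
    (hev : EvenlyCovered p U₀) (hW₁c : IsPreconnected W₁)
    (hsub : W₁ ⊆ U₀) {x : X} (hx : p x ∈ W₁) :
    MapsHomeomorphicallyOnto p (connectedComponentIn (p ⁻¹' W₁) x) W₁ := by
  have hxU₀ : x ∈ p ⁻¹' U₀ := hsub hx
  set C := connectedComponentIn (p ⁻¹' U₀) x with hC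
  obtain ⟨h, hcompat⟩ := hev.2 C ⟨x, hxU₀, rfl⟩
  set N := connectedComponentIn (p ⁻¹' W₁) x with hN
  have hNW₁ : N ⊆ p ⁻¹' W₁ := connectedComponentIn_subset _ _
  -- the key identity : N = C ∩ p⁻¹ W₁
  have hkey : N = C ∩ p ⁻¹' W₁ := by
    apply subset_antisymm
    · intro z hz
      refine ⟨?_, connectedComponentIn_subset (p ⁻¹' W₁) x hz⟩
      exact (IsPreconnected.subset_connectedComponentIn isPreconnected_connectedComponentIn
        (mem_connectedComponentIn (show x ∈ p ⁻¹' W₁ from hx))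
        ((connectedComponentIn_subset (p ⁻¹' W₁) x).trans (preimage_mono hsub))) hz
    · -- C ∩ p⁻¹ W₁ is preconnected since it is homeomorphic to W₁
      have himg : Subtype.val '' ((fun c : C => h c) ⁻¹' ((Subtype.val : U₀ → Y) ⁻¹' W₁))
          = C ∩ p ⁻¹' W₁ := by
        ext z; constructor
        · rintro ⟨c, hc, rfl⟩
          refine ⟨c.2, ?_⟩
          have : ((h c : U₀) : Y) ∈ W₁ := hc
          rwa [hcompat c] at this
        · rintro ⟨hzC, hzW⟩
          refine ⟨⟨z, hzC⟩, ?_, rfl⟩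
          show ((h ⟨z, hzC⟩ : U₀) : Y) ∈ W₁
          rwa [hcompat ⟨z, hzC⟩]
      have hpre : IsPreconnected (C ∩ p ⁻¹' W₁) := by
        rw [← himg]
        apply IsPreconnected.image _ _ continuous_subtype_val.continuousOn
        rw [show (fun c : C => h c) = ⇑h from rfl, Homeomorph.isPreconnected_preimage h]
        exact subtype_val_preimage_preconnected hsub hW₁c
      have hxmem : x ∈ C ∩ p ⁻¹' W₁ := ⟨mem_connectedComponentIn hxU₀, hx⟩
      exact hpre.subset_connectedComponentIn hxmem inter_subset_right
  have hNC : N ⊆ C := by rw [hkey]; exact inter_subset_left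
  -- build the homeomorphism
  have hmemN : ∀ w : W₁, ((h.symm ⟨w.1, hsub w.2⟩ : C) : X) ∈ N := by
    intro w
    rw [hkey]
    refine ⟨(h.symm ⟨w.1, hsub w.2⟩).2, ?_⟩
    show p ((h.symm ⟨w.1, hsub w.2⟩ : C) : X) ∈ W₁
    rw [← hcompat (h.symm ⟨w.1, hsub w.2⟩), h.apply_symm_apply]
    exact w.2
  refine ⟨⟨⟨fun v => ⟨p v.1, hNW₁ v.2⟩, fun w => ⟨(h.symm ⟨w.1, hsub w.2⟩ : C), hmemN w⟩,
    ?_, ?_⟩, ?_, ?_⟩, fun v => rfl⟩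
  · intro v
    apply Subtype.ext
    have h1 : h ⟨v.1, hNC v.2⟩ = ⟨p v.1, hsub (hNW₁ v.2)⟩ := by
      apply Subtype.ext; exact hcompat _
    show ((h.symm ⟨p v.1, hsub (hNW₁ v.2)⟩ : C) : X) = (v : X)
    rw [← h1, h.symm_apply_apply]
  · intro w
    apply Subtype.ext
    show p ((h.symm ⟨w.1, hsub w.2⟩ : C) : X) = (w : Y)
    rw [← hcompat (h.symm ⟨w.1, hsub w.2⟩), h.apply_symm_apply]
  · exact Continuous.subtype_mk (hpc.comp continuous_subtype_val) _
  · exact Continuous.subtype_mk (continuous_subtype_val.comp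
      (h.symm.continuous.comp (Continuous.subtype_mk continuous_subtype_val _))) _

lemma homeo_trace_connected {p : X → Y} {N : Set X} {W₁ : Set Y}
    (hh : MapsHomeomorphicallyOnto p N W₁) {T : Set Y} (hT : IsConnected (W₁ ∩ T)) :
    IsConnected (N ∩ p ⁻¹' T) := by
  obtain ⟨h, hcompat⟩ := hh
  set s : Set W₁ := (Subtype.val : W₁ → Y) ⁻¹' T with hs
  have hspre : IsPreconnected s := by
    have : s = (Subtype.val : W₁ → Y) ⁻¹' (W₁ ∩ T) := by
      ext w; exact ⟨fun hw => ⟨w.2, hw⟩, fun hw => hw.2⟩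
    rw [this]
    exact subtype_val_preimage_preconnected inter_subset_left hT.isPreconnected
  have himg : Subtype.val '' (⇑h ⁻¹' s) = N ∩ p ⁻¹' T := by
    ext z; constructor
    · rintro ⟨v, hv, rfl⟩
      refine ⟨v.2, ?_⟩
      have : ((h v : W₁) : Y) ∈ T := hv
      rwa [hcompat v] at this
    · rintro ⟨hzN, hzT⟩
      refine ⟨⟨z, hzN⟩, ?_, rfl⟩
      show ((h ⟨z, hzN⟩ : W₁) : Y) ∈ T
      rwa [hcompat ⟨z, hzN⟩]
  constructor
  · obtain ⟨y, hy⟩ := hT.nonempty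
    obtain ⟨v, hv⟩ := h.surjective ⟨y, hy.1⟩
    refine ⟨v.1, v.2, ?_⟩
    show p (v : X) ∈ T
    rw [← hcompat v, hv]
    exact hy.2
  · rw [← himg]
    apply IsPreconnected.image _ _ continuous_subtype_val.continuousOn
    rw [Homeomorph.isPreconnected_preimage h]
    exact hspre

section LocConn
variable [LocallyConnectedSpace X] [LocallyConnectedSpace Y]

lemma spread_shrink {p : X → Y} (hsp : IsSpread p)
    {x : X} {O : Set X} (hO : IsOpen O) (hxO : x ∈ O) {W : Set Y} (hW : IsOpen W)
    (hpx : p x ∈ W) :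
    ∃ W₁ : Set Y, IsOpen W₁ ∧ IsConnected W₁ ∧ p x ∈ W₁ ∧ W₁ ⊆ W ∧
      connectedComponentIn (p ⁻¹' W₁) x ⊆ O := by
  obtain ⟨V', hV'basic, hxV', hV'sub⟩ := hsp.2.exists_subset_of_mem_open
    (show x ∈ O ∩ p ⁻¹' W from ⟨hxO, hpx⟩) (hO.inter (hW.preimage hsp.1))
  obtain ⟨W', hW'o, x'', hx''mem, hV'⟩ := hV'basic
  have hV'x : V' = connectedComponentIn (p ⁻¹' W') x := by
    rw [hV']; exact connectedComponentIn_eq (by rw [← hV']; exact hxV')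
  have hpxW' : p x ∈ W' := by
    have := hV'sub hxV'
    have h2 : x ∈ p ⁻¹' W' := by
      rw [hV'x] at hxV'
      exact connectedComponentIn_subset _ _ hxV'
    exact h2
  set W₁ := connectedComponentIn (W' ∩ W) (p x) with hW₁
  have hpxW₁ : p x ∈ W₁ := mem_connectedComponentIn ⟨hpxW', hpx⟩
  refine ⟨W₁, (hW'o.inter hW).connectedComponentIn, ⟨⟨p x, hpxW₁⟩,
    isPreconnected_connectedComponentIn⟩, hpxW₁,
    (connectedComponentIn_subset _ _).trans inter_subset_right, ?_⟩
  have : connectedComponentIn (p ⁻¹' W₁) x ⊆ V' := by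
    rw [hV'x]
    exact IsPreconnected.subset_connectedComponentIn isPreconnected_connectedComponentIn
      (mem_connectedComponentIn hpxW₁)
      ((connectedComponentIn_subset (p ⁻¹' W₁) x).trans
        (preimage_mono ((connectedComponentIn_subset _ _).trans inter_subset_left)))
  exact this.trans (hV'sub.trans inter_subset_left)

lemma ordinary_shrink {p : X → Y} (hsp : IsSpread p)
    {x : X} (hx : x ∈ OrdTotal p) {O : Set X} (hO : IsOpen O) (hxO : x ∈ O) :
    ∃ W₁ N : _, IsOpen W₁ ∧ IsConnected W₁ ∧ p x ∈ W₁ ∧ W₁ ⊆ OrdBase p ∧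
      N = connectedComponentIn (p ⁻¹' W₁) x ∧ IsOpen N ∧ x ∈ N ∧ N ⊆ O ∧
      MapsHomeomorphicallyOnto p N W₁ := by
  obtain ⟨U₀, hU₀ev, hpxU₀⟩ := mem_ordBase_iff.mp hx
  obtain ⟨W₁, hW₁o, hW₁c, hpxW₁, hW₁sub, hNsub⟩ := spread_shrink hsp hO hxO hU₀ev.1 hpxU₀
  refine ⟨W₁, connectedComponentIn (p ⁻¹' W₁) x, hW₁o, hW₁c, hpxW₁,
    hW₁sub.trans hU₀ev.subset_ordBase, rfl, (hW₁o.preimage hsp.1).connectedComponentIn,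
    mem_connectedComponentIn hpxW₁, hNsub,
    evenlyCovered_restrict hsp.1 hU₀ev hW₁c.isPreconnected hW₁sub hpxW₁⟩

end LocConn

lemma homeo_trace_nonempty {p : X → Y} {N : Set X} {W₁ : Set Y}
    (hh : MapsHomeomorphicallyOnto p N W₁) {T : Set Y} (hT : (W₁ ∩ T).Nonempty) :
    (N ∩ p ⁻¹' T).Nonempty := by
  obtain ⟨h, hcompat⟩ := hh
  obtain ⟨y, hy⟩ := hT
  obtain ⟨v, hv⟩ := h.surjective ⟨y, hy.1⟩
  refine ⟨v.1, v.2, ?_⟩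
  show p (v : X) ∈ T
  rw [← hcompat v, hv]
  exact hy.2

lemma isConnected_val_image {Z : Set X} {A : Set Z} (hA : IsConnected A) :
    IsConnected (Subtype.val '' A) :=
  ⟨hA.nonempty.image _, Topology.IsInducing.subtypeVal.isPreconnected_image.mpr hA.2⟩

lemma dense_val_preimage {Z : Set X} (hZo : IsOpen Z) {D : Set X} (hD : Dense D) :
    Dense ((Subtype.val : Z → X) ⁻¹' D) := by
  rw [dense_iff_inter_open]
  rintro A hA hAne
  have : (Subtype.val '' A ∩ D).Nonempty :=
    hD.inter_open_nonempty _ (hZo.isOpenMap_subtype_val A hA) (hAne.image _)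
  obtain ⟨w, ⟨a, ha, rfl⟩, hwD⟩ := this
  exact ⟨a, ha, hwD⟩

lemma portly_of_superset {Z : Set X} (hZo : IsOpen Z) {P : Set X} (hP : Dense P)
    (hPc : ∀ W : Set X, IsOpen W → IsConnected W → IsConnected (W ∩ P))
    {S : Set Z} (hSo : IsOpen S) (hsub : ((Subtype.val : Z → X) ⁻¹' P) ⊆ S) :
    Portly Z S := by
  have hdense : Dense ((Subtype.val : Z → X) ⁻¹' P) := dense_val_preimage hZo hP
  refine ⟨hSo, hdense.mono hsub, ?_⟩
  intro W' hW'o hW'c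
  have hW'img : IsConnected (Subtype.val '' W') := isConnected_val_image hW'c
  have hA₀ : IsConnected (Subtype.val '' W' ∩ P) :=
    hPc _ (hZo.isOpenMap_subtype_val W' hW'o) hW'img
  have hA₀Z : Subtype.val '' W' ∩ P ⊆ Z := fun w hw => by
    obtain ⟨a, -, rfl⟩ := hw.1; exact a.2
  have hA'eq : W' ∩ (Subtype.val : Z → X) ⁻¹' P
      = (Subtype.val : Z → X) ⁻¹' (Subtype.val '' W' ∩ P) := by
    ext z
    simp only [mem_inter_iff, mem_preimage, mem_image]
    constructor
    · rintro ⟨hz, hzP⟩; exact ⟨⟨z, hz, rfl⟩, hzP⟩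
    · rintro ⟨⟨a, ha, hav⟩, hzP⟩
      cases Subtype.val_injective hav
      exact ⟨ha, hzP⟩
  have hA' : IsConnected (W' ∩ (Subtype.val : Z → X) ⁻¹' P) := by
    rw [hA'eq]
    refine ⟨?_, subtype_val_preimage_preconnected hA₀Z hA₀.isPreconnected⟩
    obtain ⟨w, hw⟩ := hA₀.nonempty
    exact ⟨⟨w, hA₀Z hw⟩, hw⟩
  apply hA'.subset_closure (inter_subset_inter_right _ hsub)
  rintro b ⟨hbW, hbS⟩
  rw [mem_closure_iff]
  intro o ho hbo
  have : ((o ∩ W') ∩ (Subtype.val : Z → X) ⁻¹' P).Nonempty :=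
    hdense.inter_open_nonempty _ (ho.inter hW'o) ⟨b, hbo, hbW⟩
  obtain ⟨w, ⟨hwo, hwW⟩, hwP⟩ := this
  exact ⟨w, hwo, hwW, hwP⟩

lemma restrict_mapsHomeo {p : X → Y} {U S₁ : Set Y} (hS₁U : S₁ ⊆ U) {V : Set X}
    (hVZ : V ⊆ p ⁻¹' U) (hh : MapsHomeomorphicallyOnto p V S₁) :
    MapsHomeomorphicallyOnto (Set.MapsTo.restrict p (p ⁻¹' U) U (Set.mapsTo_preimage p U))
      ((Subtype.val : (p ⁻¹' U) → X) ⁻¹' V) ((Subtype.val : U → Y) ⁻¹' S₁) := by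
  obtain ⟨h, hcompat⟩ := hh
  refine ⟨(restrictHomeo hVZ).trans (h.trans (restrictHomeo hS₁U).symm), ?_⟩
  intro v
  apply Subtype.ext
  simp only [Homeomorph.trans_apply, Set.MapsTo.val_restrict_apply, restrictHomeo,
    Homeomorph.homeomorph_mk_coe_symm, Equiv.coe_fn_symm_mk, Homeomorph.homeomorph_mk_coe,
    Equiv.coe_fn_mk]
  exact hcompat _

section Main
variable [LocallyConnectedSpace X] [LocallyConnectedSpace Y] {p : X → Y}

lemma dense_preimage_of_dense (hsp : IsSpread p) (hOT : Dense (OrdTotal p))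
    {U : Set Y} (hUd : Dense U) : Dense (p ⁻¹' U) := by
  rw [dense_iff_inter_open]
  rintro O hO hOne
  obtain ⟨x, hxO, hxOT⟩ := hOT.inter_open_nonempty O hO hOne
  obtain ⟨W₁, N, hW₁o, hW₁c, hpxW₁, -, -, -, -, hNO, hh⟩ :=
    ordinary_shrink hsp hxOT hO hxO
  obtain ⟨v, hvN, hvU⟩ := homeo_trace_nonempty hh
    (hUd.inter_open_nonempty W₁ hW₁o ⟨p x, hpxW₁⟩)
  exact ⟨v, hNO hvN, hvU⟩

/-- The central connectivity lemma: if `V` is a connected component of the preimage of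
an open set and `U` is portly, then `V ∩ p⁻¹ U` is connected. -/
lemma component_inter_preimage_connected (hp : IsBranchedCovering p)
    {U : Set Y} (hU : Portly Y U) {W₀ : Set Y} (hW₀o : IsOpen W₀)
    {V : Set X} (hV : IsComponentOf V (p ⁻¹' W₀)) :
    IsConnected (V ∩ p ⁻¹' U) := by
  obtain ⟨hcs, hsurj, hXc, hYc, hPOT, hPOB⟩ := hp
  have hsp := hcs.1
  obtain ⟨x₀, hx₀, hVeq⟩ := hV
  have hVo : IsOpen V := hVeq ▸ ((hW₀o.preimage hsp.1).connectedComponentIn)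
  have hVc : IsConnected V :=
    ⟨⟨x₀, hVeq ▸ mem_connectedComponentIn hx₀⟩, hVeq ▸ isPreconnected_connectedComponentIn⟩
  have hγc : IsConnected (V ∩ OrdTotal p) := hPOT.2.2 V hVo hVc
  have hOTo : IsOpen (OrdTotal p) := (isOpen_ordBase p).preimage hsp.1
  have hγo : IsOpen (V ∩ OrdTotal p) := hVo.inter hOTo
  have hchain : IsConnected ((V ∩ OrdTotal p) ∩ p ⁻¹' U) := by
    apply chain_lemma hγc hγo
    intro x hx O hO hxO
    obtain ⟨W₁, N, hW₁o, hW₁c, hpxW₁, -, -, hNo, hxN, hNO, hh⟩ :=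
      ordinary_shrink hsp hx.2 (hO.inter hγo) ⟨hxO, hx⟩
    exact ⟨N, hNo, hxN, hNO, homeo_trace_connected hh (hU.2.2 W₁ hW₁o hW₁c)⟩
  apply hchain.subset_closure (inter_subset_inter_left _ inter_subset_left)
  intro v hv
  rw [mem_closure_iff]
  intro o ho hvo
  obtain ⟨w, hwo, hwOT⟩ := hPOT.2.1.inter_open_nonempty (o ∩ (V ∩ p ⁻¹' U))
    (ho.inter (hVo.inter ((hU.1.preimage hsp.1)))) ⟨v, hvo, hv⟩
  exact ⟨w, hwo.1, ⟨⟨hwo.2.1, hwOT⟩, hwo.2.2⟩⟩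

lemma portly_preimage (hp : IsBranchedCovering p) {U : Set Y} (hU : Portly Y U) :
    Portly X (p ⁻¹' U) := by
  have hsp := hp.1.1
  refine ⟨hU.1.preimage hsp.1, dense_preimage_of_dense hsp hp.2.2.2.2.1.2.1 hU.2.1, ?_⟩
  intro W hWo hWc
  apply chain_lemma hWc hWo
  intro x hxW O hO hxO
  obtain ⟨W₁, hW₁o, hW₁c, hpxW₁, -, hNsub⟩ := spread_shrink hsp (hO.inter hWo) ⟨hxO, hxW⟩
    isOpen_univ (mem_univ _)
  refine ⟨connectedComponentIn (p ⁻¹' W₁) x, (hW₁o.preimage hsp.1).connectedComponentIn,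
    mem_connectedComponentIn hpxW₁, hNsub, ?_⟩
  exact component_inter_preimage_connected hp hU hW₁o ⟨x, hpxW₁, rfl⟩

lemma restriction_isBranchedCovering [T1Space Y] (hp : IsBranchedCovering p)
    {U : Set Y} (hU : Portly Y U) :
    IsBranchedCovering (Set.MapsTo.restrict p (p ⁻¹' U) U (Set.mapsTo_preimage p U)) := by
  have hZportly := portly_preimage hp hU
  obtain ⟨hcs, hsurj, hXc, hYc, hPOT, hPOB⟩ := hp
  have hsp := hcs.1
  have hUo : IsOpen U := hU.1
  have hZo : IsOpen (p ⁻¹' U) := hUo.preimage hsp.1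
  set q : (p ⁻¹' U) → U := Set.MapsTo.restrict p (p ⁻¹' U) U (Set.mapsTo_preimage p U) with hqdef
  have hqval : ∀ z : (p ⁻¹' U), ((q z : U) : Y) = p z.1 :=
    fun z => Set.MapsTo.val_restrict_apply _ z
  have hqc : Continuous q := hsp.1.restrict _
  have hqpre : ∀ S₁ : Set Y, q ⁻¹' ((Subtype.val : U → Y) ⁻¹' S₁)
      = (Subtype.val : (p ⁻¹' U) → X) ⁻¹' (p ⁻¹' S₁) := by
    intro S₁
    ext z
    simp only [mem_preimage, hqval z]
  have hqpre' : ∀ U₁ : Set U, q ⁻¹' U₁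
      = (Subtype.val : (p ⁻¹' U) → X) ⁻¹' (p ⁻¹' (Subtype.val '' U₁)) := by
    intro U₁
    conv_lhs => rw [← preimage_image_eq U₁ Subtype.val_injective]
    exact hqpre _
  -- transfer of components
  have hcomp_transfer : ∀ (S₁ : Set Y), S₁ ⊆ U → ∀ V' : Set (p ⁻¹' U),
      IsComponentOf V' (q ⁻¹' ((Subtype.val : U → Y) ⁻¹' S₁)) →
      ∃ x : X, x ∈ p ⁻¹' S₁ ∧
        V' = (Subtype.val : (p ⁻¹' U) → X) ⁻¹' (connectedComponentIn (p ⁻¹' S₁) x) := by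
    intro S₁ hS₁U V' ⟨z, hz, hVeq⟩
    rw [hqpre S₁] at hz hVeq
    have hFZ : p ⁻¹' S₁ ⊆ p ⁻¹' U := preimage_mono hS₁U
    refine ⟨z.1, hz, ?_⟩
    rw [hVeq, ← connectedComponentIn_val_preimage hFZ hz]
  -- q is a spread
  have hqspread : IsSpread q := by
    refine ⟨hqc, isTopologicalBasis_of_isOpen_of_nhds ?_ ?_⟩
    · rintro V' ⟨U₁, hU₁o, hV'comp⟩
      rw [hqpre' U₁] at hV'comp
      have hS₁U : Subtype.val '' U₁ ⊆ U := by rintro w ⟨a, -, rfl⟩; exact a.2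
      obtain ⟨x, hx, hVeq⟩ := hcomp_transfer _ hS₁U V' (by rwa [hqpre])
      rw [hVeq]
      apply IsOpen.preimage continuous_subtype_val
      exact (IsOpen.preimage hsp.1 (hUo.isOpenMap_subtype_val U₁ hU₁o)).connectedComponentIn
    · intro a O' haO' hO'
      have hO : IsOpen (Subtype.val '' O') := hZo.isOpenMap_subtype_val O' hO'
      obtain ⟨W₁, hW₁o, hW₁c, hpaW₁, hW₁U, hNsub⟩ := spread_shrink hsp hO
        (mem_image_of_mem _ haO') hUo a.2
      have hFZ : p ⁻¹' W₁ ⊆ p ⁻¹' U := preimage_mono hW₁U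
      refine ⟨(Subtype.val : (p ⁻¹' U) → X) ⁻¹' (connectedComponentIn (p ⁻¹' W₁) a.1),
        ⟨(Subtype.val : U → Y) ⁻¹' W₁, hW₁o.preimage continuous_subtype_val, ?_⟩, ?_, ?_⟩
      · refine ⟨a, ?_, ?_⟩
        · rw [hqpre]; exact hpaW₁
        · rw [hqpre]
          rw [connectedComponentIn_val_preimage hFZ hpaW₁]
      · exact mem_connectedComponentIn hpaW₁
      · intro z hz
        have : z.1 ∈ Subtype.val '' O' := hNsub hz
        obtain ⟨b, hb, hbz⟩ := this
        cases Subtype.val_injective hbz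
        exact hb
  -- q is surjective
  have hqsurj : Function.Surjective q := by
    rintro ⟨y, hy⟩
    obtain ⟨x, rfl⟩ := hsurj y
    exact ⟨⟨x, hy⟩, Subtype.ext (hqval _)⟩
  -- the ordinary locus of q contains the restriction of the ordinary locus of p
  have hOBq_sub : ((Subtype.val : U → Y) ⁻¹' OrdBase p) ⊆ OrdBase q := by
    rintro ⟨y, hyU⟩ hyOB
    obtain ⟨U₀, hU₀ev, hyU₀⟩ := mem_ordBase_iff.mp hyOB
    set U₀' := connectedComponentIn U₀ y with hU₀'
    have hU₀'c : IsConnected U₀' := ⟨⟨y, mem_connectedComponentIn hyU₀⟩,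
      isPreconnected_connectedComponentIn⟩
    have hU₀'o : IsOpen U₀' := hU₀ev.1.connectedComponentIn
    set W₁ := U₀' ∩ U with hW₁
    have hW₁c : IsConnected W₁ := hU.2.2 U₀' hU₀'o hU₀'c
    have hW₁U₀ : W₁ ⊆ U₀ := inter_subset_left.trans (connectedComponentIn_subset _ _)
    have hW₁U : W₁ ⊆ U := inter_subset_right
    refine ⟨(Subtype.val : U → Y) ⁻¹' W₁,
      (hU₀'o.inter hUo).preimage continuous_subtype_val,
      ⟨mem_connectedComponentIn hyU₀, hyU⟩, ?_⟩
    intro V' hV'comp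
    obtain ⟨x, hx, hVeq⟩ := hcomp_transfer W₁ hW₁U V' hV'comp
    rw [hVeq]
    exact restrict_mapsHomeo hW₁U ((connectedComponentIn_subset _ _).trans
      (preimage_mono hW₁U))
      (evenlyCovered_restrict hsp.1 hU₀ev hW₁c.isPreconnected hW₁U₀ hx)
  have hOTq_sub : ((Subtype.val : (p ⁻¹' U) → X) ⁻¹' OrdTotal p) ⊆ OrdTotal q := by
    intro z hz
    show q z ∈ OrdBase q
    apply hOBq_sub
    show ((q z : U) : Y) ∈ OrdBase p
    rw [hqval z]
    exact hz
  -- completeness of q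
  have hqcomplete : IsCompleteSpread q := by
    refine ⟨hqspread, ?_⟩
    intro y' _ χ' hχ'comp hχ'mono
    set y := (y' : Y) with hy
    have hcUc : ∀ Uc : {W : Set Y // IsOpen W ∧ IsConnected W ∧ y ∈ W},
        IsOpen ((Subtype.val : U → Y) ⁻¹' (connectedComponentIn (Uc.1 ∩ U) y)) ∧
        IsConnected ((Subtype.val : U → Y) ⁻¹' (connectedComponentIn (Uc.1 ∩ U) y)) ∧
        y' ∈ (Subtype.val : U → Y) ⁻¹' (connectedComponentIn (Uc.1 ∩ U) y) := by
      intro Uc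
      exact ⟨((Uc.2.1.inter hUo).connectedComponentIn).preimage continuous_subtype_val,
        ⟨⟨y', mem_connectedComponentIn ⟨Uc.2.2.2, y'.2⟩⟩,
          subtype_val_preimage_preconnected
            ((connectedComponentIn_subset _ _).trans inter_subset_right)
            isPreconnected_connectedComponentIn⟩,
        mem_connectedComponentIn ⟨Uc.2.2.2, y'.2⟩⟩
    set c : {W : Set Y // IsOpen W ∧ IsConnected W ∧ y ∈ W} →
        {W₁ : Set U // IsOpen W₁ ∧ IsConnected W₁ ∧ y' ∈ W₁} :=
      fun Uc => ⟨(Subtype.val : U → Y) ⁻¹' (connectedComponentIn (Uc.1 ∩ U) y), hcUc Uc⟩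
      with hcdef
    have hzex : ∀ Uc, ∃ z : (p ⁻¹' U), z ∈ q ⁻¹' (c Uc).1 ∧
        χ' (c Uc) = connectedComponentIn (q ⁻¹' (c Uc).1) z := fun Uc => hχ'comp (c Uc)
    choose z hzmem hzeq using hzex
    set χ : {W : Set Y // IsOpen W ∧ IsConnected W ∧ y ∈ W} → Set X :=
      fun Uc => connectedComponentIn (p ⁻¹' Uc.1) (z Uc).1 with hχdef
    have hzmem' : ∀ Uc, (z Uc).1 ∈ p ⁻¹' Uc.1 := by
      intro Uc
      have h2 : p (z Uc).1 ∈ connectedComponentIn (Uc.1 ∩ U) y := by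
        rw [← hqval (z Uc)]; exact hzmem Uc
      have h3 : p (z Uc).1 ∈ Uc.1 ∩ U := connectedComponentIn_subset _ _ h2
      exact h3.1
    have hzχ' : ∀ Uc, z Uc ∈ χ' (c Uc) := fun Uc =>
      (hzeq Uc) ▸ mem_connectedComponentIn (hzmem Uc)
    have hχmono : ∀ Uc Vc, Uc.1 ⊆ Vc.1 → χ Uc ⊆ χ Vc := by
      intro Uc Vc hUV
      have hcsub : (c Uc).1 ⊆ (c Vc).1 :=
        preimage_mono (connectedComponentIn_mono _ (inter_subset_inter_left _ hUV))
      have h1 : z Uc ∈ χ' (c Vc) := hχ'mono (c Uc) (c Vc) hcsub (hzχ' Uc)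
      have hχ'pre : IsPreconnected (Subtype.val '' χ' (c Vc)) := by
        rw [hzeq Vc]
        exact isPreconnected_connectedComponentIn.image _ continuous_subtype_val.continuousOn
      have hsubV : Subtype.val '' χ' (c Vc) ⊆ p ⁻¹' Vc.1 := by
        rintro w ⟨a, ha, rfl⟩
        have ha2 : a ∈ q ⁻¹' (c Vc).1 := by
          rw [hzeq Vc] at ha
          exact connectedComponentIn_subset _ _ ha
        have h3 : p a.1 ∈ connectedComponentIn (Vc.1 ∩ U) y := by
          rw [← hqval a]; exact ha2
        have h4 : p a.1 ∈ Vc.1 ∩ U := connectedComponentIn_subset _ _ h3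
        exact h4.1
      have hmemcc : (z Uc).1 ∈ connectedComponentIn (p ⁻¹' Vc.1) (z Vc).1 :=
        hχ'pre.subset_connectedComponentIn ⟨z Vc, hzχ' Vc, rfl⟩ hsubV ⟨z Uc, h1, rfl⟩
      calc χ Uc ⊆ connectedComponentIn (p ⁻¹' Vc.1) (z Uc).1 :=
            connectedComponentIn_mono _ (preimage_mono hUV)
        _ = connectedComponentIn (p ⁻¹' Vc.1) (z Vc).1 := (connectedComponentIn_eq hmemcc).symm
        _ = χ Vc := rfl
    have hyrange : y ∈ closure (Set.range p) := by
      rw [hsurj.range_eq]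
      simp
    obtain ⟨xinf, hxinf⟩ := hcs.2 y hyrange χ (fun Uc => ⟨(z Uc).1, hzmem' Uc, rfl⟩) hχmono
    have hxinfmem : ∀ Uc, xinf ∈ χ Uc := by
      intro Uc
      exact mem_iInter.mp hxinf Uc
    have hpxinf : p xinf = y := by
      have hmemO : ∀ O : Set Y, IsOpen O → y ∈ O → p xinf ∈ O := by
        intro O hOo hyO
        have h := hxinfmem ⟨connectedComponentIn O y, hOo.connectedComponentIn,
          ⟨⟨y, mem_connectedComponentIn hyO⟩, isPreconnected_connectedComponentIn⟩,
          mem_connectedComponentIn hyO⟩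
        have h2 : xinf ∈ p ⁻¹' (connectedComponentIn O y) := connectedComponentIn_subset _ _ h
        exact (connectedComponentIn_subset _ _) h2
      have hcl : y ∈ closure {p xinf} := by
        rw [mem_closure_iff]
        intro o ho hyo
        exact ⟨p xinf, hmemO o ho hyo, rfl⟩
      rw [closure_singleton, mem_singleton_iff] at hcl
      exact hcl.symm
    have hxinfU : xinf ∈ p ⁻¹' U := by
      rw [mem_preimage, hpxinf]
      exact y'.2
    refine ⟨⟨xinf, hxinfU⟩, ?_⟩
    rw [mem_iInter]
    intro U₁c
    set S := Subtype.val '' U₁c.1 with hS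
    have hSU : S ⊆ U := by rintro w ⟨a, -, rfl⟩; exact a.2
    have hSo : IsOpen S := hUo.isOpenMap_subtype_val _ U₁c.2.1
    have hSc : IsConnected S := isConnected_val_image U₁c.2.2.1
    have hyS : y ∈ S := ⟨y', U₁c.2.2.2, rfl⟩
    set Uc₀ : {W : Set Y // IsOpen W ∧ IsConnected W ∧ y ∈ W} := ⟨S, hSo, hSc, hyS⟩
      with hUc₀
    have hceq : c Uc₀ = U₁c := by
      apply Subtype.ext
      show (Subtype.val : U → Y) ⁻¹' (connectedComponentIn (S ∩ U) y) = U₁c.1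
      rw [inter_eq_left.mpr hSU,
        preconn_connectedComponentIn_eq hSc.isPreconnected hyS]
      exact preimage_image_eq _ Subtype.val_injective
    have hFZ : p ⁻¹' S ⊆ p ⁻¹' U := preimage_mono hSU
    have hzS : (z Uc₀).1 ∈ p ⁻¹' S := hzmem' Uc₀
    have hkey : χ' U₁c = (Subtype.val : (p ⁻¹' U) → X) ⁻¹' (χ Uc₀) := by
      rw [← hceq, hzeq Uc₀, hceq]
      show connectedComponentIn (q ⁻¹' U₁c.1) (z Uc₀) = _
      rw [hqpre' U₁c.1]
      have heq2 : χ Uc₀ = connectedComponentIn (p ⁻¹' S) (z Uc₀).1 := rfl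
      rw [heq2, ← connectedComponentIn_val_preimage hFZ hzS]
    rw [hkey]
    show xinf ∈ χ Uc₀
    exact hxinfmem Uc₀
  -- connectedness of the subspaces
  haveI := hXc
  haveI := hYc
  have hZconn : ConnectedSpace (p ⁻¹' U) := Subtype.connectedSpace (by
    have := hZportly.2.2 univ isOpen_univ isConnected_univ
    rwa [univ_inter] at this)
  have hUconn : ConnectedSpace U := Subtype.connectedSpace (by
    have := hU.2.2 univ isOpen_univ isConnected_univ
    rwa [univ_inter] at this)
  -- portliness of the ordinary loci of q
  have hOBqportly : Portly U (OrdBase q) :=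
    portly_of_superset hUo hPOB.2.1 hPOB.2.2 (isOpen_ordBase q) hOBq_sub
  have hOTqportly : Portly (p ⁻¹' U) (OrdTotal q) :=
    portly_of_superset hZo hPOT.2.1 hPOT.2.2 ((isOpen_ordBase q).preimage hqc) hOTq_sub
  exact ⟨hqcomplete, hqsurj, hZconn, hUconn, hOTqportly, hOBqportly⟩

end Main

end BCLemmas

theorem stmt12 {X Y : Type*} [TopologicalSpace X] [TopologicalSpace Y]
    [T2Space X] [T2Space Y] [FirstCountableTopology X] [FirstCountableTopology Y]
    [LocallyPathConnectedSpace X] [LocallyPathConnectedSpace Y]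
    (p : X → Y) (hp : IsBranchedCovering p) (U : Set Y) (hU : Portly Y U) :
    Portly X (p ⁻¹' U) ∧
    IsBranchedCovering
      (Set.MapsTo.restrict p (p ⁻¹' U) U (Set.mapsTo_preimage p U)) := by
  exact ⟨portly_preimage hp hU, restriction_isBranchedCovering hp hU⟩
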